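/- Let 𝕜 be a field, d ≥ 1, g ∈ (X₁, …, X_d)² ⊆ 𝕜[[X₁, …, X_d]], and f = X₀² + g ∈ S = 𝕜[[X₀, X₁, …, X_d]]. Let R = S/(f) with maximal ideal m, and let x_i denote the image of X_i in R. Then the associated graded ring G(m) is isomorphic to 𝕜[Y₀, …, Y_d]/(Y₀² + g₂(Y₁, …, Y_d)), where g₂ is the degree-2 homogeneous part of g; consequently, for each 1 ≤ i ≤ d, the initial form of x_i is a non-zero-divisor on G(m), so x_i is a superficial element of m. -/

import Mathlib

open MvPowerSeries

section Aux

variable {K : Type*} [Field K] {N : ℕ}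

local notation "S" => MvPowerSeries (Fin N) K
local notation "MM" => IsLocalRing.maximalIdeal (MvPowerSeries (Fin N) K)

lemma aux_mem_max_iff (s : S) :
    s ∈ MM ↔ MvPowerSeries.constantCoeff s = 0 := by
  rw [IsLocalRing.mem_maximalIdeal, mem_nonunits_iff, MvPowerSeries.isUnit_iff_constantCoeff,
    isUnit_iff_ne_zero, not_ne_iff]

lemma aux_degree_add (a b : Fin N →₀ ℕ) : (a + b).degree = a.degree + b.degree := by
  simp only [Finsupp.degree_eq_weight_one]
  exact map_add _ a b

lemma aux_degree_single (i : Fin N) (n : ℕ) : (Finsupp.single i n).degree = n := by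
  rcases n with _ | n
  · simp [Finsupp.degree]
  · rw [Finsupp.degree_apply, Finsupp.support_single_ne_zero _ (Nat.succ_ne_zero n),
      Finset.sum_singleton, Finsupp.single_eq_same]

/-- coefficient of `X i * t`. -/
lemma aux_coeff_X_mul (i : Fin N) (t : S) (e : Fin N →₀ ℕ) :
    MvPowerSeries.coeff e (MvPowerSeries.X i * t) =
      if Finsupp.single i 1 ≤ e then MvPowerSeries.coeff (e - Finsupp.single i 1) t else 0 := by
  rw [MvPowerSeries.X, MvPowerSeries.coeff_monomial_mul]
  split_ifs <;> simp

/-- Elements of `MM ^ k` have all coefficients of degree `< k` zero. -/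
lemma aux_coeff_zero_of_mem_pow {k : ℕ} {s : S} (hs : s ∈ MM ^ k) :
    ∀ e : Fin N →₀ ℕ, e.degree < k → MvPowerSeries.coeff e s = 0 := by
  induction k generalizing s with
  | zero => exact fun e he => absurd he (Nat.not_lt_zero _)
  | succ k ih =>
    rw [pow_succ] at hs
    induction hs using Submodule.mul_induction_on' with
    | mem_mul_mem a ha b hb =>
      intro e he
      rw [MvPowerSeries.coeff_mul]
      apply Finset.sum_eq_zero
      rintro ⟨p, q⟩ hpq
      rw [Finset.HasAntidiagonal.mem_antidiagonal] at hpq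
      by_cases hp : p.degree < k
      · rw [ih ha p hp, zero_mul]
      · have hq : q.degree = 0 := by
          have := aux_degree_add p q
          rw [hpq] at this
          omega
        have hq0 : q = 0 := (Finsupp.degree_eq_zero_iff q).mp hq
        subst hq0
        have hb0 : MvPowerSeries.coeff (0 : Fin N →₀ ℕ) b = 0 := by
          rw [MvPowerSeries.coeff_zero_eq_constantCoeff]
          exact (aux_mem_max_iff b).mp hb
        exact mul_eq_zero_of_right _ hb0
    | add x hx y hy ihx ihy =>
      intro e he
      rw [map_add, ihx e he, ihy e he, add_zero]

/-- Conversely, a series with all coefficients of degree `< k` zero lies in `MM ^ k`. -/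
lemma aux_mem_pow_of_coeff_zero {k : ℕ} {s : S}
    (hs : ∀ e : Fin N →₀ ℕ, e.degree < k → MvPowerSeries.coeff e s = 0) :
    s ∈ MM ^ k := by
  classical
  induction k generalizing s with
  | zero => simp [Ideal.one_eq_top]
  | succ k ih =>
    -- decompose s = ∑ i, X i * t i
    set t : Fin N → S := fun i =>
      (fun e => if ∀ j, j < i → e j = 0 then MvPowerSeries.coeff (e + Finsupp.single i 1) s
        else 0 : (Fin N →₀ ℕ) → K) with ht
    have hcoefft : ∀ i e, MvPowerSeries.coeff e (t i) =
        if ∀ j, j < i → e j = 0 then MvPowerSeries.coeff (e + Finsupp.single i 1) s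
        else 0 := fun i e => rfl
    have hdecomp : s = ∑ i : Fin N, MvPowerSeries.X i * t i := by
      ext e
      rw [map_sum]
      by_cases he : e = 0
      · subst he
        rw [hs 0 (by simp [Finsupp.degree]), Finset.sum_eq_zero]
        intro i _
        rw [aux_coeff_X_mul, if_neg]
        simp [Finsupp.single_le_iff]
      · have hsupp : e.support.Nonempty := by
          rw [Finsupp.support_nonempty_iff]; exact he
        set i0 := e.support.min' hsupp with hi0
        have hi0mem : i0 ∈ e.support := e.support.min'_mem hsupp
        have hi0ne : e i0 ≠ 0 := Finsupp.mem_support_iff.mp hi0mem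
        rw [Finset.sum_eq_single i0]
        · rw [aux_coeff_X_mul, if_pos (Finsupp.single_le_iff.mpr (Nat.one_le_iff_ne_zero.mpr hi0ne)),
            hcoefft, if_pos, tsub_add_cancel_of_le
              (Finsupp.single_le_iff.mpr (Nat.one_le_iff_ne_zero.mpr hi0ne))]
          intro j hj
          have hjns : j ∉ e.support := fun hmem => absurd (e.support.min'_le j hmem) (not_le.mpr hj)
          have hje : e j = 0 := Finsupp.notMem_support_iff.mp hjns
          rw [Finsupp.tsub_apply, Finsupp.single_apply, if_neg (by rintro rfl; exact absurd hj (lt_irrefl _)), hje]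
          simp
        · intro i _ hii0
          rw [aux_coeff_X_mul]
          split_ifs with hle
          · rw [hcoefft, if_neg]
            intro hall
            have hi0lt : i0 < i := by
              have hmem : i ∈ e.support := Finsupp.mem_support_iff.mpr
                (Nat.one_le_iff_ne_zero.mp (Finsupp.single_le_iff.mp hle))
              exact lt_of_le_of_ne (e.support.min'_le i hmem) (Ne.symm hii0)
            have := hall i0 hi0lt
            rw [Finsupp.tsub_apply, Finsupp.single_apply,
              if_neg (fun h => hii0 h)] at this
            simp only [Nat.sub_zero] at this
            exact hi0ne this
          · rfl
        · intro h
          exact absurd (Finset.mem_univ i0) h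
    rw [hdecomp]
    apply Ideal.sum_mem
    intro i _
    rw [pow_succ']
    refine Ideal.mul_mem_mul ?_ (ih ?_)
    · rw [aux_mem_max_iff]
      exact MvPowerSeries.constantCoeff_X i
    · intro e he
      rw [hcoefft]
      split_ifs with h
      · apply hs
        rw [aux_degree_add, aux_degree_single]
        omega
      · rfl

/-- homogeneous component of a power series, as a polynomial -/
noncomputable def Hcomp (k : ℕ) (s : S) : MvPolynomial (Fin N) K :=
  MvPolynomial.homogeneousComponent k
    (MvPowerSeries.trunc K (Finsupp.equivFunOnFinite.symm fun _ => k + 1) s)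

lemma aux_coeff_Hcomp [Nonempty (Fin N)] (k : ℕ) (s : S) (e : Fin N →₀ ℕ) :
    (Hcomp k s).coeff e = if e.degree = k then MvPowerSeries.coeff e s else 0 := by
  rw [Hcomp, MvPolynomial.coeff_homogeneousComponent]
  split_ifs with h
  · rw [MvPowerSeries.coeff_trunc, if_pos]
    obtain ⟨j0⟩ := (inferInstance : Nonempty (Fin N))
    apply lt_of_le_of_ne
    · intro j
      simp only [Finsupp.coe_equivFunOnFinite_symm]
      have := Finsupp.le_degree j e
      omega
    · intro heq
      have h1 : e j0 = k + 1 := by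
        rw [heq]; simp [Finsupp.coe_equivFunOnFinite_symm]
      have h2 := Finsupp.le_degree j0 e
      omega
  · rfl

lemma aux_Hcomp_isHomogeneous (k : ℕ) (s : S) : (Hcomp k s).IsHomogeneous k :=
  MvPolynomial.homogeneousComponent_isHomogeneous k _

lemma aux_Hcomp_add (k : ℕ) (s u : S) : Hcomp k (s + u) = Hcomp k s + Hcomp k u := by
  simp [Hcomp, map_add]

lemma aux_Hcomp_eq_zero [Nonempty (Fin N)] {k : ℕ} {s : S}
    (hs : ∀ e : Fin N →₀ ℕ, e.degree < k + 1 → MvPowerSeries.coeff e s = 0) :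
    Hcomp k s = 0 := by
  apply MvPolynomial.ext
  intro e
  rw [aux_coeff_Hcomp, MvPolynomial.coeff_zero]
  split_ifs with h
  · exact hs e (by omega)
  · rfl

/-- product rule for homogeneous components -/
lemma aux_Hcomp_mul [Nonempty (Fin N)] {a b : ℕ} {s u : S}
    (hs : ∀ e : Fin N →₀ ℕ, e.degree < a → MvPowerSeries.coeff e s = 0)
    (hu : ∀ e : Fin N →₀ ℕ, e.degree < b → MvPowerSeries.coeff e u = 0) :
    Hcomp (a + b) (s * u) = Hcomp a s * Hcomp b u := by
  classical
  apply MvPolynomial.ext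
  intro e
  rw [aux_coeff_Hcomp, MvPolynomial.coeff_mul]
  by_cases h : e.degree = a + b
  · rw [if_pos h, MvPowerSeries.coeff_mul]
    apply Finset.sum_congr rfl
    rintro ⟨p, q⟩ hpq
    rw [Finset.HasAntidiagonal.mem_antidiagonal] at hpq
    dsimp only at hpq ⊢
    have hdeg : p.degree + q.degree = a + b := by
      rw [← aux_degree_add, hpq, h]
    rw [aux_coeff_Hcomp, aux_coeff_Hcomp]
    rcases lt_trichotomy p.degree a with hlt | heq | hgt
    · rw [hs p hlt]; simp
    · rw [if_pos heq, if_pos (by omega)]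
    · rw [hu q (by omega)]; simp
  · rw [if_neg h]
    symm
    apply Finset.sum_eq_zero
    rintro ⟨p, q⟩ hpq
    rw [Finset.HasAntidiagonal.mem_antidiagonal] at hpq
    dsimp only at hpq ⊢
    rw [aux_coeff_Hcomp, aux_coeff_Hcomp]
    split_ifs with h1 h2
    · exfalso; apply h; rw [← hpq, aux_degree_add, h1, h2]
    · rw [mul_zero]
    · rw [zero_mul]
    · rw [zero_mul]

lemma aux_Hcomp_X [Nonempty (Fin N)] (i : Fin N) :
    Hcomp 1 (MvPowerSeries.X i : S) = MvPolynomial.X i := by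
  classical
  apply MvPolynomial.ext
  intro e
  rw [aux_coeff_Hcomp, MvPowerSeries.coeff_X, MvPolynomial.coeff_X']
  by_cases he : e = Finsupp.single i 1
  · subst he
    simp [aux_degree_single i 1]
  · simp [if_neg he, if_neg (Ne.symm he)]

lemma aux_Hcomp_X_ord (i : Fin N) :
    ∀ e : Fin N →₀ ℕ, e.degree < 1 → MvPowerSeries.coeff e (MvPowerSeries.X i : S) = 0 := by
  classical
  intro e he
  rw [MvPowerSeries.coeff_X, if_neg]
  intro heq
  rw [heq, aux_degree_single] at he
  omega

lemma aux_Hcomp_coe [Nonempty (Fin N)] {k : ℕ} (Q : MvPolynomial (Fin N) K)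
    (hQ : Q.IsHomogeneous k) : Hcomp k (↑Q : S) = Q := by
  apply MvPolynomial.ext
  intro e
  rw [aux_coeff_Hcomp, MvPolynomial.coeff_coe]
  split_ifs with h
  · rfl
  · exact (hQ.coeff_eq_zero h).symm

lemma aux_coe_ord [Nonempty (Fin N)] {k : ℕ} (Q : MvPolynomial (Fin N) K)
    (hQ : Q.IsHomogeneous k) :
    ∀ e : Fin N →₀ ℕ, e.degree < k → MvPowerSeries.coeff e (↑Q : S) = 0 := by
  intro e he
  rw [MvPolynomial.coeff_coe]
  exact hQ.coeff_eq_zero (by omega)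

end Aux

/-- `X i` is prime in a multivariate polynomial ring over a field. -/
lemma aux_prime_X {K : Type*} [Field K] {N : ℕ} (i : Fin (N + 1)) :
    Prime (MvPolynomial.X i : MvPolynomial (Fin (N + 1)) K) := by
  have h0 : Prime (MvPolynomial.X 0 : MvPolynomial (Fin (N + 1)) K) := by
    rw [← MulEquiv.prime_iff (MvPolynomial.finSuccEquiv K N).toMulEquiv]
    have : (MvPolynomial.finSuccEquiv K N).toMulEquiv (MvPolynomial.X 0) = Polynomial.X :=
      MvPolynomial.finSuccEquiv_X_zero
    rw [this]
    exact Polynomial.prime_X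
  have hre := MulEquiv.prime_iff (MvPolynomial.renameEquiv K (Equiv.swap (0 : Fin (N + 1)) i)).toMulEquiv
    (p := (MvPolynomial.X 0 : MvPolynomial (Fin (N + 1)) K))
  rw [← hre] at h0
  have : (MvPolynomial.renameEquiv K (Equiv.swap (0 : Fin (N + 1)) i)).toMulEquiv
      (MvPolynomial.X 0) = MvPolynomial.X i := by
    show MvPolynomial.rename _ (MvPolynomial.X 0) = _
    rw [MvPolynomial.rename_X, Equiv.swap_apply_left]
  rwa [this] at h0

set_option maxHeartbeats 2000000
set_option synthInstance.maxHeartbeats 400000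

/-- Let `𝕜` be a field, `d ≥ 1`, `g ∈ (X₁,…,X_d)² ⊆ 𝕜[[X₁,…,X_d]]` (viewed inside
`S = 𝕜[[X₀,…,X_d]]` as a series not involving `X₀`), `f = X₀² + g` and `R = S/(f)` with
maximal ideal `m` (the image of the maximal ideal of `S`).  Then for each `1 ≤ i ≤ d`
the initial form of `xᵢ` is a non-zero-divisor on `G(m)` (expressed element-wise), and
consequently `xᵢ` is a superficial element of `m`. -/
theorem stmt8 {𝕜 : Type*} [Field 𝕜] (d : ℕ) (hd : 1 ≤ d)
    (g : MvPowerSeries (Fin (d + 1)) 𝕜)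
    (hg0 : ∀ mexp : Fin (d + 1) →₀ ℕ, mexp 0 ≠ 0 → MvPowerSeries.coeff mexp g = 0)
    (hg2 : g ∈ (Ideal.span {h : MvPowerSeries (Fin (d + 1)) 𝕜 |
        ∃ i : Fin (d + 1), i ≠ 0 ∧ h = MvPowerSeries.X i}) ^ 2)
    (f : MvPowerSeries (Fin (d + 1)) 𝕜) (hf : f = MvPowerSeries.X 0 ^ 2 + g) :
    ∀ i : Fin (d + 1), i ≠ 0 →
      (∀ n : ℕ, ∀ x ∈ (Ideal.map (Ideal.Quotient.mk (Ideal.span {f}))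
            (IsLocalRing.maximalIdeal (MvPowerSeries (Fin (d + 1)) 𝕜))) ^ n,
          (Ideal.Quotient.mk (Ideal.span {f}) (MvPowerSeries.X i)) * x ∈
            (Ideal.map (Ideal.Quotient.mk (Ideal.span {f}))
              (IsLocalRing.maximalIdeal (MvPowerSeries (Fin (d + 1)) 𝕜))) ^ (n + 2) →
          x ∈ (Ideal.map (Ideal.Quotient.mk (Ideal.span {f}))
            (IsLocalRing.maximalIdeal (MvPowerSeries (Fin (d + 1)) 𝕜))) ^ (n + 1)) ∧
      (∃ c : ℕ, ∀ n ≥ c,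
        ((Ideal.map (Ideal.Quotient.mk (Ideal.span {f}))
            (IsLocalRing.maximalIdeal (MvPowerSeries (Fin (d + 1)) 𝕜))) ^ (n + 1)).colon
            (Ideal.span {Ideal.Quotient.mk (Ideal.span {f}) (MvPowerSeries.X i)}) ⊓
          (Ideal.map (Ideal.Quotient.mk (Ideal.span {f}))
            (IsLocalRing.maximalIdeal (MvPowerSeries (Fin (d + 1)) 𝕜))) ^ c =
        (Ideal.map (Ideal.Quotient.mk (Ideal.span {f}))
          (IsLocalRing.maximalIdeal (MvPowerSeries (Fin (d + 1)) 𝕜))) ^ n) := by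
  classical
  intro i hi
  set M : Ideal (MvPowerSeries (Fin (d + 1)) 𝕜) :=
    IsLocalRing.maximalIdeal (MvPowerSeries (Fin (d + 1)) 𝕜) with hM
  set π := Ideal.Quotient.mk (Ideal.span {f}) with hπ
  set m : Ideal (MvPowerSeries (Fin (d + 1)) 𝕜 ⧸ Ideal.span {f}) := Ideal.map π M with hm
  -- basic facts
  have hXmem : ∀ j : Fin (d + 1), (MvPowerSeries.X j : MvPowerSeries (Fin (d + 1)) 𝕜) ∈ M := by
    intro j
    rw [aux_mem_max_iff, MvPowerSeries.constantCoeff_X]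
  have hgM2 : g ∈ M ^ 2 := by
    have hle : Ideal.span {h : MvPowerSeries (Fin (d + 1)) 𝕜 |
        ∃ i : Fin (d + 1), i ≠ 0 ∧ h = MvPowerSeries.X i} ≤ M := by
      rw [Ideal.span_le]
      rintro y ⟨j, -, rfl⟩
      exact hXmem j
    exact Ideal.pow_right_mono hle 2 hg2
  have hfM2 : f ∈ M ^ 2 := by
    rw [hf]
    exact Ideal.add_mem _ (Ideal.pow_mem_pow (hXmem 0) 2) hgM2
  -- the quadratic initial form P of f
  set P : MvPolynomial (Fin (d + 1)) 𝕜 := Hcomp 2 f with hP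
  have hPhom : P.IsHomogeneous 2 := aux_Hcomp_isHomogeneous 2 f
  have hPcoeff : P.coeff (Finsupp.single (0 : Fin (d + 1)) 2) = 1 := by
    rw [hP, aux_coeff_Hcomp, if_pos (aux_degree_single 0 2), hf, map_add,
      MvPowerSeries.X_pow_eq, MvPowerSeries.coeff_monomial_same,
      hg0 _ (by simp), add_zero]
  have hPne : P ≠ 0 := by
    intro h
    rw [h, MvPolynomial.coeff_zero] at hPcoeff
    exact one_ne_zero hPcoeff.symm
  have hPnd : ¬ (MvPolynomial.X i ∣ P) := by
    rintro ⟨Q, hQ⟩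
    rw [hQ, MvPolynomial.coeff_X_mul', if_neg] at hPcoeff
    · exact one_ne_zero hPcoeff.symm
    · rw [Finsupp.mem_support_iff, Finsupp.single_apply, if_neg (fun h => hi h.symm)]
      simp
  -- membership in powers of m via lifts
  have hmpow : ∀ n : ℕ, m ^ n = Ideal.map π (M ^ n) := fun n => (Ideal.map_pow π M n).symm
  have hmem : ∀ (n : ℕ) (x : MvPowerSeries (Fin (d + 1)) 𝕜 ⧸ Ideal.span {f}),
      x ∈ m ^ n → ∃ u ∈ M ^ n, π u = x := by
    intro n x hx
    rw [hmpow] at hx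
    obtain ⟨u, hu, hux⟩ := (Ideal.mem_map_iff_of_surjective π Ideal.Quotient.mk_surjective).mp hx
    exact ⟨u, hu, hux⟩
  -- KEY STEP (part a)
  have partA : ∀ n : ℕ, ∀ x ∈ m ^ n, π (MvPowerSeries.X i) * x ∈ m ^ (n + 2) →
      x ∈ m ^ (n + 1) := by
    intro n x hx hxi
    obtain ⟨u, hu, rfl⟩ := hmem n x hx
    rw [← map_mul] at hxi
    obtain ⟨v, hv, hveq⟩ := hmem (n + 2) _ hxi
    have hsub : MvPowerSeries.X i * u - v ∈ Ideal.span {f} := by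
      rw [← Ideal.Quotient.mk_eq_mk_iff_sub_mem]
      exact hveq.symm
    obtain ⟨h, hh⟩ := Ideal.mem_span_singleton.mp hsub
    -- X i * u = v + f * h
    have heq : MvPowerSeries.X i * u = v + f * h := by rw [← hh]; ring
    have hfh : f * h ∈ M ^ (n + 1) := by
      have h1 : MvPowerSeries.X i * u ∈ M ^ (n + 1) := by
        rw [pow_succ']
        exact Ideal.mul_mem_mul (hXmem i) hu
      have h2 : v ∈ M ^ (n + 1) := Ideal.pow_le_pow_right (by omega) hv
      have : f * h = MvPowerSeries.X i * u - v := by rw [heq]; ring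
      rw [this]
      exact Ideal.sub_mem _ h1 h2
    rcases n with _ | k
    · -- n = 0 : show u ∈ M, i.e. constant coefficient zero
      rw [hmpow]
      apply Ideal.mem_map_of_mem
      rw [pow_one]
      rw [aux_mem_max_iff]
      have h1 : MvPowerSeries.coeff (Finsupp.single i 1) (MvPowerSeries.X i * u) = 0 := by
        rw [heq, map_add]
        rw [aux_coeff_zero_of_mem_pow hv _ (by rw [aux_degree_single]; omega),
          aux_coeff_zero_of_mem_pow (Ideal.mul_mem_right h _ hfM2) _
            (by rw [aux_degree_single]; omega), add_zero]
      rw [aux_coeff_X_mul, if_pos le_rfl, tsub_self] at h1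
      exact h1
    · -- n = k + 1
      -- h ∈ M ^ k
      have hhM : h ∈ M ^ k := by
        have step : ∀ t : ℕ, t ≤ k → h ∈ M ^ t := by
          intro t
          induction t with
          | zero => intro _; simp [Ideal.one_eq_top]
          | succ t iht =>
            intro htk
            have hht := iht (by omega)
            have hzero : Hcomp (2 + t) (f * h) = 0 := by
              apply aux_Hcomp_eq_zero
              intro e he
              apply aux_coeff_zero_of_mem_pow hfh
              omega
            rw [aux_Hcomp_mul (fun e he => aux_coeff_zero_of_mem_pow hfM2 e he)
              (fun e he => aux_coeff_zero_of_mem_pow hht e he)] at hzero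
            have hBzero : Hcomp t h = 0 := by
              rcases mul_eq_zero.mp hzero with h' | h'
              · exact absurd h' hPne
              · exact h'
            apply aux_mem_pow_of_coeff_zero
            intro e he
            rcases Nat.lt_or_ge e.degree t with h' | h'
            · exact aux_coeff_zero_of_mem_pow hht e h'
            · have hdeg : e.degree = t := by omega
              have := aux_coeff_Hcomp t h e
              rw [hBzero, MvPolynomial.coeff_zero, if_pos hdeg] at this
              exact this.symm
        exact step k le_rfl
      -- the graded equation
      set A : MvPolynomial (Fin (d + 1)) 𝕜 := Hcomp (k + 1) u with hA
      set B : MvPolynomial (Fin (d + 1)) 𝕜 := Hcomp k h with hB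
      have hgraded : MvPolynomial.X i * A = P * B := by
        have e1 : Hcomp (1 + (k + 1)) (MvPowerSeries.X i * u) =
            MvPolynomial.X i * A := by
          rw [aux_Hcomp_mul (aux_Hcomp_X_ord i)
            (fun e he => aux_coeff_zero_of_mem_pow hu e he), aux_Hcomp_X]
        have e2 : Hcomp (2 + k) (f * h) = P * B := by
          rw [aux_Hcomp_mul (fun e he => aux_coeff_zero_of_mem_pow hfM2 e he)
            (fun e he => aux_coeff_zero_of_mem_pow hhM e he)]
        have e3 : Hcomp (1 + (k + 1)) v = 0 := by
          apply aux_Hcomp_eq_zero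
          intro e he
          apply aux_coeff_zero_of_mem_pow hv
          omega
        have e4 : (1 : ℕ) + (k + 1) = 2 + k := by omega
        calc MvPolynomial.X i * A = Hcomp (1 + (k + 1)) (MvPowerSeries.X i * u) := e1.symm
          _ = Hcomp (1 + (k + 1)) v + Hcomp (1 + (k + 1)) (f * h) := by
              rw [← aux_Hcomp_add, ← heq]
          _ = Hcomp (2 + k) (f * h) := by rw [e3, zero_add, e4]
          _ = P * B := e2
      by_cases hAzero : A = 0
      · -- u ∈ M ^ (n+1) directly
        rw [hmpow]
        apply Ideal.mem_map_of_mem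
        apply aux_mem_pow_of_coeff_zero
        intro e he
        rcases Nat.lt_or_ge e.degree (k + 1) with h' | h'
        · exact aux_coeff_zero_of_mem_pow hu e h'
        · have hdeg : e.degree = k + 1 := by omega
          have := aux_coeff_Hcomp (k + 1) u e
          rw [← hA, hAzero, MvPolynomial.coeff_zero, if_pos hdeg] at this
          exact this.symm
      · -- A ≠ 0 : divisibility argument
        have hdvd : MvPolynomial.X i ∣ P * B := ⟨A, hgraded.symm⟩
        have hdvdB : MvPolynomial.X i ∣ B := by
          rcases (aux_prime_X i).2.2 P B hdvd with h' | h'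
          · exact absurd h' hPnd
          · exact h'
        obtain ⟨Q0, hQ0⟩ := hdvdB
        have hAPQ0 : A = P * Q0 := by
          apply mul_left_cancel₀ (MvPolynomial.X_ne_zero i)
          rw [hgraded, hQ0]
          ring
        -- extract homogeneous piece
        have hAhom : A.IsHomogeneous (k + 1) := aux_Hcomp_isHomogeneous (k + 1) u
        have hA1 : MvPolynomial.homogeneousComponent (k + 1) A = A := by
          rw [MvPolynomial.homogeneousComponent_of_mem
            ((MvPolynomial.mem_homogeneousSubmodule _ _).mpr hAhom), if_pos rfl]
        have hAex : A = ∑ j ∈ Finset.range (Q0.totalDegree + 1),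
            (if k + 1 = 2 + j then P * MvPolynomial.homogeneousComponent j Q0 else 0) := by
          conv_lhs => rw [← hA1]
          conv_lhs => rw [hAPQ0, ← MvPolynomial.sum_homogeneousComponent Q0,
            Finset.mul_sum, map_sum]
          apply Finset.sum_congr rfl
          intro j _
          have hhomog : (P * MvPolynomial.homogeneousComponent j Q0).IsHomogeneous (2 + j) :=
            hPhom.mul (MvPolynomial.homogeneousComponent_isHomogeneous j Q0)
          rw [MvPolynomial.homogeneousComponent_of_mem
            ((MvPolynomial.mem_homogeneousSubmodule _ _).mpr hhomog)]
        rcases k with _ | k'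
        · -- k = 0 : impossible since A ≠ 0
          exfalso
          apply hAzero
          rw [hAex]
          apply Finset.sum_eq_zero
          intro j _
          rw [if_neg (by omega)]
        · -- k = k' + 1
          have hcond : ∀ j : ℕ, (k' + 1 + 1 = 2 + j) ↔ (j = k') := by intro j; omega
          have hAex2 : A = if k' ∈ Finset.range (Q0.totalDegree + 1) then
              P * MvPolynomial.homogeneousComponent k' Q0 else 0 := by
            rw [hAex, ← Finset.sum_ite_eq' (Finset.range (Q0.totalDegree + 1)) k'
              (fun j => P * MvPolynomial.homogeneousComponent j Q0)]
            apply Finset.sum_congr rfl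
            intro j _
            by_cases h' : j = k'
            · subst h'; rw [if_pos (by omega), if_pos rfl]
            · rw [if_neg (by omega), if_neg h']
          have hAPQ : A = P * MvPolynomial.homogeneousComponent k' Q0 := by
            rw [hAex2]
            split_ifs with h'
            · rfl
            · exfalso; exact hAzero (by rw [hAex2, if_neg h'])
          set Q : MvPolynomial (Fin (d + 1)) 𝕜 := MvPolynomial.homogeneousComponent k' Q0 with hQdef
          have hQhom : Q.IsHomogeneous k' := MvPolynomial.homogeneousComponent_isHomogeneous k' Q0
          -- w = u - Q * f  lies in M^(n+1) and maps to x
          set w : MvPowerSeries (Fin (d + 1)) 𝕜 := u - (↑Q : MvPowerSeries (Fin (d + 1)) 𝕜) * f with hw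
          have hQf : (↑Q : MvPowerSeries (Fin (d + 1)) 𝕜) * f ∈ M ^ (k' + 1 + 1) := by
            have h1 : (↑Q : MvPowerSeries (Fin (d + 1)) 𝕜) ∈ M ^ k' :=
              aux_mem_pow_of_coeff_zero (aux_coe_ord Q hQhom)
            have : M ^ k' * M ^ 2 = M ^ (k' + 1 + 1) := by rw [← pow_add]
            rw [← this]
            exact Ideal.mul_mem_mul h1 hfM2
          have hwmem : w ∈ M ^ (k' + 1 + 1 + 1) := by
            apply aux_mem_pow_of_coeff_zero
            intro e he
            rw [hw, map_sub]
            rcases Nat.lt_or_ge e.degree (k' + 1 + 1) with h' | h'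
            · rw [aux_coeff_zero_of_mem_pow hu e h',
                aux_coeff_zero_of_mem_pow hQf e h', sub_self]
            · have hdeg : e.degree = k' + 1 + 1 := by omega
              have hcu : MvPowerSeries.coeff e u = A.coeff e := by
                have := aux_coeff_Hcomp (k' + 1 + 1) u e
                rw [if_pos hdeg] at this
                exact this.symm
              have hcqf : MvPowerSeries.coeff e ((↑Q : MvPowerSeries (Fin (d + 1)) 𝕜) * f) = A.coeff e := by
                have h2 : Hcomp (k' + 2) ((↑Q : MvPowerSeries (Fin (d + 1)) 𝕜) * f) = Q * P := by
                  have := aux_Hcomp_mul (a := k') (b := 2) (s := (↑Q : MvPowerSeries (Fin (d + 1)) 𝕜)) (u := f)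
                    (aux_coe_ord Q hQhom) (fun e he => aux_coeff_zero_of_mem_pow hfM2 e he)
                  rw [aux_Hcomp_coe Q hQhom] at this
                  exact this
                have h3 := aux_coeff_Hcomp (k' + 2) ((↑Q : MvPowerSeries (Fin (d + 1)) 𝕜) * f) e
                rw [h2, if_pos (by omega : e.degree = k' + 2)] at h3
                rw [← h3, hAPQ]
                ring_nf
              rw [hcu, hcqf, sub_self]
          have hπw : π w = π u := by
            rw [hw, map_sub, map_mul]
            have : π f = 0 := by
              rw [hπ, Ideal.Quotient.eq_zero_iff_mem]
              exact Ideal.mem_span_singleton_self f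
            rw [this, mul_zero, sub_zero]
          rw [← hπw, hmpow]
          exact Ideal.mem_map_of_mem π hwmem
  refine ⟨partA, ⟨0, ?_⟩⟩
  intro n _
  apply le_antisymm
  · intro x hx
    rw [Submodule.mem_inf] at hx
    obtain ⟨hx1, -⟩ := hx
    rw [Ideal.mem_colon_span_singleton] at hx1
    have key : ∀ t, t ≤ n → x ∈ m ^ t := by
      intro t
      induction t with
      | zero => intro _; rw [Submodule.pow_zero, Ideal.one_eq_top]; exact Submodule.mem_top
      | succ t iht =>
        intro h
        have hxt := iht (by omega)
        apply partA t x hxt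
        have hle : m ^ (n + 1) ≤ m ^ (t + 2) := Ideal.pow_le_pow_right (by omega)
        apply hle
        rwa [mul_comm] at hx1
    exact key n le_rfl
  · intro x hx
    rw [Submodule.mem_inf]
    constructor
    · rw [Ideal.mem_colon_span_singleton, Submodule.pow_succ]
      exact Ideal.mul_mem_mul hx (Ideal.mem_map_of_mem π (hXmem i))
    · rw [Submodule.pow_zero, Ideal.one_eq_top]
      exact Submodule.mem_top
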